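/- For all integers Δ ≥ 1, r ≥ 1 and all reals Λ > 0 and c₃ > 0 there exists a constant c₂ > 0 such that the following holds for every instance of the local-potential framework whose vertex set has n ≥ 2 elements. Let β > 0, let 0 < ε < β, and let (A_1, ℓ_1), …, (A_h, ℓ_h) be a sequence of β-improving sets with respect to a labeling ℓ such that any two vertices belonging to the same set A_i are at graph distance at most c₃·(log n)/ε in G. Then for every 1 ≤ j ≤ h and every v ∈ A_j there exist a natural number k ≤ c₂·(log n)²/ε², a nonempty set A ⊆ N_k[{v}] ∩ (A_1 ∪ … ∪ A_h), and a relabeling ℓ_A of A such that IR(A, ℓ, ℓ_A) ≥ β − ε. -/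

import Mathlib

open scoped Classical

/-- `withinDist G r u v` means the graph distance between `u` and `v` in `G`
is at most `r` (there is a walk of length at most `r`). -/
def withinDist {V : Type*} (G : SimpleGraph V) (r : ℕ) (u v : V) : Prop :=
  ∃ p : G.Walk u v, p.length ≤ r

/-- The improving ratio `IR(A, ℓ, ℓ') = (Pot(ℓ) − Pot(ℓ'))/|A|` if `A ≠ ∅`,
and `0` if `A = ∅`. -/
noncomputable def IR {V : Type*} [Fintype V] {L : Type*}
    (Ψ : V → (V → L) → ℝ) (A : Set V) (ℓ ℓ' : V → L) : ℝ :=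
  if A = ∅ then 0 else ((∑ v, Ψ v ℓ) - ∑ v, Ψ v ℓ') / A.ncard

lemma ncard_biUnion_le {ι V : Type*} [Fintype V] (s : Finset ι) (f : ι → Set V) :
    (⋃ i ∈ s, f i).ncard ≤ ∑ i ∈ s, (f i).ncard := by
  induction s using Finset.induction with
  | empty => simp
  | insert a s hn ih =>
    rw [Finset.sum_insert hn, Finset.set_biUnion_insert]
    exact le_trans (Set.ncard_union_le _ _) (by gcongr)

lemma ball_ncard {V : Type*} [Fintype V] {G : SimpleGraph V} {Δ : ℕ}
    (hdeg : ∀ v, (G.neighborSet v).ncard ≤ Δ) (x : V) (k : ℕ) :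
    {u | withinDist G k x u}.ncard ≤ (Δ + 1) ^ k := by
  induction k generalizing x with
  | zero =>
    have : {u | withinDist G 0 x u} ⊆ {x} := by
      rintro u ⟨p, hp⟩
      have := p.eq_of_length_eq_zero (Nat.le_zero.mp hp)
      simp [this.symm]
    simpa using le_trans (Set.ncard_le_ncard this (Set.finite_singleton x)) (le_of_eq (Set.ncard_singleton x))
  | succ k ih =>
    classical
    have hsub : {u | withinDist G (k+1) x u} ⊆
        ⋃ y ∈ (insert x (G.neighborSet x)).toFinset, {u | withinDist G k y u} := by
      rintro u ⟨p, hp⟩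
      cases p with
      | nil =>
        exact Set.mem_biUnion (show x ∈ (insert x (G.neighborSet x)).toFinset by simp [Set.mem_toFinset]) ⟨SimpleGraph.Walk.nil, by simp⟩
      | cons hadj q =>
        rename_i y
        exact Set.mem_biUnion (show y ∈ (insert x (G.neighborSet x)).toFinset by simp [Set.mem_toFinset, hadj]) ⟨q, by simpa using hp⟩
    refine le_trans (Set.ncard_le_ncard hsub (Set.toFinite _)) ?_
    refine le_trans (ncard_biUnion_le _ _) ?_
    refine le_trans (Finset.sum_le_sum (fun y _ => ih y)) ?_
    rw [Finset.sum_const, smul_eq_mul, pow_succ, mul_comm]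
    gcongr
    calc (insert x (G.neighborSet x)).toFinset.card
        = (insert x (G.neighborSet x)).ncard := (Set.ncard_eq_toFinset_card' _).symm
      _ ≤ (G.neighborSet x).ncard + 1 := Set.ncard_insert_le _ _
      _ ≤ Δ + 1 := by have := hdeg x; omega

lemma withinDist_refl {V : Type*} (G : SimpleGraph V) (r : ℕ) (u : V) :
    withinDist G r u u := ⟨SimpleGraph.Walk.nil, by simp⟩

lemma withinDist_symm {V : Type*} {G : SimpleGraph V} {r : ℕ} {u v : V}
    (h : withinDist G r u v) : withinDist G r v u := by
  obtain ⟨p, hp⟩ := h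
  exact ⟨p.reverse, by simpa using hp⟩

lemma withinDist_mono {V : Type*} {G : SimpleGraph V} {r r' : ℕ} (hrr : r ≤ r') {u v : V}
    (h : withinDist G r u v) : withinDist G r' u v := by
  obtain ⟨p, hp⟩ := h
  exact ⟨p, hp.trans hrr⟩

lemma withinDist_trans {V : Type*} {G : SimpleGraph V} {r s : ℕ} {u v w : V}
    (h : withinDist G r u v) (h' : withinDist G s v w) : withinDist G (r + s) u w := by
  obtain ⟨p, hp⟩ := h
  obtain ⟨q, hq⟩ := h'
  exact ⟨p.append q, by rw [SimpleGraph.Walk.length_append]; omega⟩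

/-- closed `k`-neighborhood of a set -/
def nbrSet {V : Type*} (G : SimpleGraph V) (k : ℕ) (A : Set V) : Set V :=
  {u | ∃ x ∈ A, withinDist G k u x}

lemma nbrSet_ncard {V : Type*} [Fintype V] {G : SimpleGraph V} {Δ : ℕ}
    (hdeg : ∀ v, (G.neighborSet v).ncard ≤ Δ) (k : ℕ) (A : Set V) :
    (nbrSet G k A).ncard ≤ A.ncard * (Δ + 1) ^ k := by
  classical
  have hsub : nbrSet G k A ⊆ ⋃ x ∈ A.toFinset, {u | withinDist G k x u} := by
    rintro u ⟨x, hx, hd⟩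
    exact Set.mem_biUnion (show x ∈ A.toFinset by simp [Set.mem_toFinset, hx]) (withinDist_symm hd)
  refine le_trans (Set.ncard_le_ncard hsub (Set.toFinite _)) ?_
  refine le_trans (ncard_biUnion_le _ _) ?_
  refine le_trans (Finset.sum_le_sum (fun y _ => ball_ncard hdeg y k)) ?_
  rw [Finset.sum_const, smul_eq_mul, Set.ncard_eq_toFinset_card' A]

noncomputable def applyChain {V L : Type*} {h : ℕ} (A : Fin h → Set V) (ℓ : Fin (h+1) → V → L)
    (S : Set (Fin h)) : ℕ → V → L
  | 0 => ℓ 0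
  | (m+1) => fun u =>
      if hm : m < h then
        (if (⟨m, hm⟩ : Fin h) ∈ S ∧ u ∈ A ⟨m, hm⟩
         then ℓ (Fin.succ ⟨m, hm⟩) u else applyChain A ℓ S m u)
      else applyChain A ℓ S m u

variable {V L : Type*} {h : ℕ} {A : Fin h → Set V} {ℓ : Fin (h+1) → V → L} {S : Set (Fin h)}

lemma applyChain_succ_of_mem {m : ℕ} (hm : m < h) {u : V}
    (hS : (⟨m, hm⟩ : Fin h) ∈ S) (hu : u ∈ A ⟨m, hm⟩) :
    applyChain A ℓ S (m+1) u = ℓ (Fin.succ ⟨m, hm⟩) u := by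
  simp [applyChain, hm, hS, hu]

lemma applyChain_succ_of_not {m : ℕ} {u : V}
    (hcond : ∀ hm : m < h, ¬((⟨m, hm⟩ : Fin h) ∈ S ∧ u ∈ A ⟨m, hm⟩)) :
    applyChain A ℓ S (m+1) u = applyChain A ℓ S m u := by
  by_cases hm : m < h
  · simp [applyChain, hm, hcond hm]
  · simp [applyChain, hm]

lemma applyChain_eq_chain (h0 : ∀ i : Fin h, ∀ u, u ∉ A i → ℓ i.succ u = ℓ i.castSucc u)
    (m : ℕ) (hm : m ≤ h) (u : V)
    (hcl : ∀ i : Fin h, i.val < m → u ∈ A i → i ∈ S) :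
    applyChain A ℓ S m u = ℓ ⟨m, by omega⟩ u := by
  induction m with
  | zero => rfl
  | succ m ih =>
    have hmh : m < h := by omega
    by_cases hu : u ∈ A ⟨m, hmh⟩
    · rw [applyChain_succ_of_mem hmh (hcl ⟨m, hmh⟩ (Nat.lt_succ_self m) hu) hu]
      rfl
    · rw [applyChain_succ_of_not (fun hm' => by simpa using fun _ => hu),
        ih (by omega) (fun i hi hu' => hcl i (Nat.lt_succ_of_lt hi) hu')]
      have := h0 ⟨m, hmh⟩ u hu
      have h1 : (⟨m, hmh⟩ : Fin h).castSucc = ⟨m, by omega⟩ := rfl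
      have h2 : (⟨m, hmh⟩ : Fin h).succ = ⟨m+1, by omega⟩ := rfl
      rw [h1] at this
      rw [← this, h2]

lemma applyChain_eq_outside (m : ℕ) (u : V) (hout : ∀ i ∈ S, u ∉ A i) :
    applyChain A ℓ S m u = ℓ 0 u := by
  induction m with
  | zero => rfl
  | succ m ih =>
    rw [applyChain_succ_of_not (fun hm' hc => hout _ hc.1 hc.2), ih]

lemma psi_eq_of_agree {G : SimpleGraph V} {r : ℕ} {Ψ : V → (V → L) → ℝ}
    (hloc : ∀ v (a b : V → L), (∀ u, withinDist G r v u → a u = b u) → Ψ v a = Ψ v b)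
    {B : Set V} {a b : V → L} (hab : ∀ u ∉ B, a u = b u) {u : V}
    (hu : u ∉ nbrSet G r B) : Ψ u a = Ψ u b := by
  refine hloc u a b (fun w hw => ?_)
  refine hab w (fun hwB => hu ⟨w, hwB, hw⟩)

lemma potDiff_le [Fintype V] {G : SimpleGraph V} {r : ℕ} {Ψ : V → (V → L) → ℝ} {Λ : ℝ}
    (hloc : ∀ v (a b : V → L), (∀ u, withinDist G r v u → a u = b u) → Ψ v a = Ψ v b)
    (hbd : ∀ v ℓ', 0 ≤ Ψ v ℓ' ∧ Ψ v ℓ' ≤ Λ)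
    {B : Set V} {a b : V → L} (hab : ∀ u ∉ B, a u = b u) :
    (∑ u, Ψ u a) - (∑ u, Ψ u b) ≤ Λ * (nbrSet G r B).ncard := by
  classical
  rw [← Finset.sum_sub_distrib]
  have h1 : ∑ u, (Ψ u a - Ψ u b) = ∑ u ∈ (nbrSet G r B).toFinset, (Ψ u a - Ψ u b) := by
    refine (Finset.sum_subset (Finset.subset_univ _) (fun u _ hu => ?_)).symm
    rw [psi_eq_of_agree hloc hab (by simpa [Set.mem_toFinset] using hu), sub_self]
  rw [h1, Set.ncard_eq_toFinset_card']
  calc ∑ u ∈ (nbrSet G r B).toFinset, (Ψ u a - Ψ u b)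
      ≤ ∑ _u ∈ (nbrSet G r B).toFinset, Λ := by
        refine Finset.sum_le_sum (fun u _ => ?_)
        have := hbd u a; have := hbd u b; linarith [(hbd u a).2, (hbd u b).1]
    _ = (nbrSet G r B).toFinset.card * Λ := by rw [Finset.sum_const, nsmul_eq_mul]
    _ = Λ * (nbrSet G r B).toFinset.card := by ring

lemma half_le_log_one_add {δ : ℝ} (h0 : 0 < δ) (h1 : δ ≤ 1) :
    δ / 2 ≤ Real.log (1 + δ) := by
  have hpos : (0:ℝ) < 1 + δ := by linarith
  have h2 := Real.log_le_sub_one_of_pos (show (0:ℝ) < (1+δ)⁻¹ by positivity)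
  rw [Real.log_inv] at h2
  have h3 : (1+δ)⁻¹ - 1 ≤ -(δ/2) := by
    have h4 : (1+δ)⁻¹ ≤ 1 - δ/2 := by
      rw [inv_le_iff_one_le_mul₀ hpos]
      nlinarith
    linarith
  linarith

set_option maxHeartbeats 1000000 in
/-- For all `Δ, r ≥ 1`, `Λ > 0` and `c₃ > 0` there is `c₂ > 0` such that, in
every local-potential instance on `n ≥ 2` vertices: given a sequence of
`β`-improving sets `(A 1, ℓ 1), …, (A h, ℓ h)` w.r.t. `ℓ 0`, each of diameter
at most `c₃·(log n)/ε` (where `0 < ε < β`), for every `j` and `v ∈ A j` there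
are `k ≤ c₂·(log n)²/ε²`, a nonempty `A ⊆ N_k[{v}] ∩ (A 1 ∪ … ∪ A h)`, and a
relabeling `ℓA` of `A` with `IR(A, ℓ 0, ℓA) ≥ β − ε`. -/
theorem imprChain (Δ r : ℕ) (hΔ : 1 ≤ Δ) (hr : 1 ≤ r)
    (Λ : ℝ) (hΛ : 0 < Λ) (c₃ : ℝ) (hc₃ : 0 < c₃) :
    ∃ c₂ : ℝ, 0 < c₂ ∧
      ∀ (V : Type) [Fintype V], ∀ (G : SimpleGraph V),
        (∀ v, (G.neighborSet v).ncard ≤ Δ) →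
        2 ≤ Fintype.card V →
        ∀ (L : Type) [Fintype L] [Nonempty L], ∀ (Ψ : V → (V → L) → ℝ),
          (∀ v (ℓ ℓ' : V → L),
            (∀ u, withinDist G r v u → ℓ u = ℓ' u) → Ψ v ℓ = Ψ v ℓ') →
          (∀ v ℓ, 0 ≤ Ψ v ℓ ∧ Ψ v ℓ ≤ Λ) →
          ∀ (β ε : ℝ), 0 < β → 0 < ε → ε < β →
          ∀ (h : ℕ) (ℓ : Fin (h + 1) → V → L) (A : Fin h → Set V),
            (∀ i : Fin h, ∀ v ∉ A i, ℓ i.succ v = ℓ i.castSucc v) →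
            (∀ i : Fin h, (∑ v, Ψ v (ℓ i.succ)) < ∑ v, Ψ v (ℓ i.castSucc)) →
            (∀ i : Fin h, β ≤ IR Ψ (A i) (ℓ i.castSucc) (ℓ i.succ)) →
            (∀ i : Fin h, ∀ x ∈ A i, ∀ y ∈ A i, ∃ p : G.Walk x y,
              (p.length : ℝ) ≤ c₃ * Real.log (Fintype.card V) / ε) →
            ∀ (j : Fin h), ∀ v ∈ A j,
              ∃ k : ℕ, (k : ℝ) ≤ c₂ * (Real.log (Fintype.card V)) ^ 2 / ε ^ 2 ∧
                ∃ B : Set V, B.Nonempty ∧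
                  B ⊆ {u | withinDist G k u v} ∩ (⋃ i : Fin h, A i) ∧
                  ∃ ℓB : V → L, (∀ u ∉ B, ℓB u = ℓ 0 u) ∧
                    β - ε ≤ IR Ψ B (ℓ 0) ℓB := by
  classical
  set Cb : ℝ := Λ * ((Δ:ℝ) + 1) ^ r with hCb
  have hCbpos : 0 < Cb := by positivity
  set KL : ℝ := |Real.log Λ| + |Real.log (2*Cb)| with hKL
  have hKLpos : 0 ≤ KL := by positivity
  have hlog2 : (0:ℝ) < Real.log 2 := Real.log_pos (by norm_num)
  set KT : ℝ := 4*Cb + (8*Cb + 4*Cb*KL) / Real.log 2 with hKT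
  set KD : ℝ := c₃ + (2*(r:ℝ)+1) * Cb / Real.log 2 with hKD
  have hKTpos : 0 < KT := by positivity
  have hKDpos : 0 < KD := by positivity
  refine ⟨KT * KD, by positivity, ?_⟩
  intro V _ G hdeg hn2 L _ _ Ψ hloc hbd β ε hβ hε hεβ h ℓ A h0 himp hIR hdiam j v hv
  set n := Fintype.card V with hn
  have hn1 : (1:ℝ) < (n:ℝ) := by exact_mod_cast hn2.trans_lt' (by norm_num)
  have hLg : 0 < Real.log n := Real.log_pos hn1
  have hlog2n : Real.log 2 ≤ Real.log n := by
    apply Real.log_le_log (by norm_num)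
    exact_mod_cast hn2
  -- diameter bound as a natural number
  set D' : ℕ := ⌈c₃ * Real.log n / ε⌉₊ with hD'
  have hdiam' : ∀ i : Fin h, ∀ x ∈ A i, ∀ y ∈ A i, withinDist G D' x y := by
    intro i x hx y hy
    obtain ⟨p, hp⟩ := hdiam i x hx y hy
    refine ⟨p, ?_⟩
    have h2 : (p.length : ℝ) ≤ (D' : ℝ) := hp.trans (Nat.le_ceil _)
    exact_mod_cast h2
  -- radius and index sets
  set ρ : ℕ → ℕ := fun t => D' + t * (D' + 2*r) with hρ
  set I : ℕ → Set (Fin h) := fun t => {i | ∃ x ∈ A i, withinDist G (ρ t) x v} with hI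
  have hρmono : ∀ {s t : ℕ}, s ≤ t → ρ s ≤ ρ t := by
    intro s t hst
    simp only [hρ]
    have : s * (D' + 2*r) ≤ t * (D' + 2*r) := Nat.mul_le_mul_right _ hst
    omega
  have hImono : ∀ {s t : ℕ}, s ≤ t → I s ⊆ I t := by
    rintro s t hst i ⟨x, hx, hd⟩
    exact ⟨x, hx, withinDist_mono (hρmono hst) hd⟩
  have hjI : ∀ t, j ∈ I t := fun t => ⟨v, hv, withinDist_refl G _ v⟩
  -- each A i is nonempty
  have hAcard : ∀ i : Fin h, 1 ≤ (A i).ncard := by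
    intro i
    rcases Nat.eq_zero_or_pos ((A i).ncard) with h1 | h1
    · exfalso
      have he : A i = ∅ := (Set.ncard_eq_zero (Set.toFinite _)).mp h1
      have := hIR i
      rw [IR, if_pos he] at this
      linarith
    · exact h1
  have hAβ : ∀ i : Fin h, β * (A i).ncard ≤
      (∑ u, Ψ u (ℓ i.castSucc)) - ∑ u, Ψ u (ℓ i.succ) := by
    intro i
    have hc : (0:ℝ) < (A i).ncard := by exact_mod_cast hAcard i
    have hne : A i ≠ ∅ := by
      intro he; rw [he] at hc; simp at hc
    have := hIR i
    rw [IR, if_neg hne, le_div_iff₀ hc] at this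
    linarith
  -- improvement of a single step is at most Cb * |A i|
  have hAub : ∀ i : Fin h, (∑ u, Ψ u (ℓ i.castSucc)) - (∑ u, Ψ u (ℓ i.succ))
      ≤ Cb * (A i).ncard := by
    intro i
    have h1 := potDiff_le (G := G) (r := r) hloc hbd
      (B := A i) (a := ℓ i.castSucc) (b := ℓ i.succ) (fun u hu => (h0 i u hu).symm)
    refine h1.trans ?_
    have h2 : ((nbrSet G r (A i)).ncard : ℝ) ≤ ((A i).ncard : ℝ) * ((Δ:ℝ)+1)^r := by
      have := nbrSet_ncard hdeg r (A i)
      calc ((nbrSet G r (A i)).ncard : ℝ) ≤ (((A i).ncard * (Δ+1)^r : ℕ) : ℝ) := by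
            exact_mod_cast this
        _ = ((A i).ncard : ℝ) * ((Δ:ℝ)+1)^r := by push_cast; ring
    calc Λ * ((nbrSet G r (A i)).ncard : ℝ) ≤ Λ * (((A i).ncard : ℝ) * ((Δ:ℝ)+1)^r) := by
          exact mul_le_mul_of_nonneg_left h2 hΛ.le
      _ = Cb * (A i).ncard := by rw [hCb]; ring
  have hβCb : β ≤ Cb := by
    have h1 := hAβ j
    have h2 := hAub j
    have hc : (1:ℝ) ≤ (A j).ncard := by exact_mod_cast hAcard j
    nlinarith
  have hεCb : ε < Cb := lt_of_lt_of_le hεβ hβCb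
  -- weights
  set w : ℕ → ℕ := fun t => ∑ i ∈ Finset.univ.filter (· ∈ I t), (A i).ncard with hw
  have hwmono : ∀ {s t : ℕ}, s ≤ t → w s ≤ w t := by
    intro s t hst
    refine Finset.sum_le_sum_of_subset ?_
    intro i hi
    simp only [Finset.mem_filter, Finset.mem_univ, true_and] at *
    exact hImono hst hi
  have hw0 : 1 ≤ w 0 := by
    refine le_trans (hAcard j) ?_
    refine Finset.single_le_sum (f := fun i => (A i).ncard) (fun i _ => Nat.zero_le _) ?_
    simp only [Finset.mem_filter, Finset.mem_univ, true_and]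
    exact hjI 0
  set W : ℕ := ∑ i : Fin h, (A i).ncard with hW
  have hwW : ∀ t, w t ≤ W := by
    intro t
    exact Finset.sum_le_sum_of_subset (Finset.filter_subset _ _)
  have hWn : β * (W:ℝ) ≤ Λ * n := by
    set P : ℕ → ℝ := fun m => if hm : m < h+1 then ∑ u, Ψ u (ℓ ⟨m, hm⟩) else 0 with hP
    have tele : ∑ m ∈ Finset.range h, (P m - P (m+1)) = P 0 - P h :=
      Finset.sum_range_sub' P h
    have hPi : ∀ i : Fin h, (∑ u, Ψ u (ℓ i.castSucc)) - (∑ u, Ψ u (ℓ i.succ))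
        = P i.val - P (i.val+1) := by
      intro i
      have h1 : P i.val = ∑ u, Ψ u (ℓ i.castSucc) := by
        simp only [hP]; rw [dif_pos (by omega)]; rfl
      have h2 : P (i.val+1) = ∑ u, Ψ u (ℓ i.succ) := by
        simp only [hP]; rw [dif_pos (by omega)]; rfl
      rw [h1, h2]
    have h3 : β * (W:ℝ) ≤ ∑ i : Fin h, ((∑ u, Ψ u (ℓ i.castSucc)) - ∑ u, Ψ u (ℓ i.succ)) := by
      rw [hW]
      push_cast
      rw [Finset.mul_sum]
      exact Finset.sum_le_sum (fun i _ => hAβ i)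
    have h4 : ∑ i : Fin h, ((∑ u, Ψ u (ℓ i.castSucc)) - ∑ u, Ψ u (ℓ i.succ)) = P 0 - P h := by
      rw [← tele, ← Fin.sum_univ_eq_sum_range (fun m => P m - P (m+1)) h]
      exact Finset.sum_congr rfl (fun i _ => hPi i)
    have h5 : P 0 ≤ Λ * n := by
      simp only [hP]; rw [dif_pos (by omega)]
      calc ∑ u, Ψ u (ℓ ⟨0, by omega⟩) ≤ ∑ _u : V, Λ :=
            Finset.sum_le_sum (fun u _ => (hbd u _).2)
        _ = Λ * n := by rw [Finset.sum_const, nsmul_eq_mul, Finset.card_univ]; ring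
    have h6 : 0 ≤ P h := by
      simp only [hP]; rw [dif_pos (by omega)]
      exact Finset.sum_nonneg (fun u _ => (hbd u _).1)
    linarith
  -- the candidate sets and labelings
  set BB : ℕ → Set V := fun t => ⋃ i ∈ I t, A i with hBB
  set lab : ℕ → V → L := fun t => applyChain A ℓ (I t) h with hlab
  have hBBsub : ∀ t, BB t ⊆ {u | withinDist G (ρ (t+1)) u v} := by
    intro t u hu
    simp only [hBB, Set.mem_iUnion] at hu
    obtain ⟨i, hiI, hui⟩ := hu
    obtain ⟨x, hx, hdxv⟩ := hiI
    have h1 : withinDist G D' u x := hdiam' i u hui x hx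
    have h2 : withinDist G (D' + ρ t) u v := withinDist_trans h1 hdxv
    refine withinDist_mono ?_ h2
    simp only [hρ, add_mul, one_mul]
    omega
  have hBBcard : ∀ t, (BB t).ncard ≤ w t := by
    intro t
    have he : BB t = ⋃ i ∈ Finset.univ.filter (· ∈ I t), A i := by
      ext u
      simp [hBB]
    rw [he]
    exact ncard_biUnion_le _ _
  have hvBB : ∀ t, v ∈ BB t := fun t => Set.mem_biUnion (hjI t) hv
  have hlabout : ∀ t, ∀ u ∉ BB t, lab t u = ℓ 0 u := by
    intro t u hu
    refine applyChain_eq_outside h u (fun i hi hui => hu ?_)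
    exact Set.mem_biUnion hi hui
  have hnbrCb : ∀ Bs : Set V, Λ * ((nbrSet G r Bs).ncard : ℝ) ≤ Cb * (Bs.ncard : ℝ) := by
    intro Bs
    have h2 : ((nbrSet G r Bs).ncard : ℝ) ≤ (Bs.ncard : ℝ) * ((Δ:ℝ)+1)^r := by
      have := nbrSet_ncard hdeg r Bs
      calc ((nbrSet G r Bs).ncard : ℝ) ≤ ((Bs.ncard * (Δ+1)^r : ℕ) : ℝ) := by exact_mod_cast this
        _ = (Bs.ncard : ℝ) * ((Δ:ℝ)+1)^r := by push_cast; ring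
    calc Λ * ((nbrSet G r Bs).ncard : ℝ) ≤ Λ * ((Bs.ncard : ℝ) * ((Δ:ℝ)+1)^r) :=
          mul_le_mul_of_nonneg_left h2 hΛ.le
      _ = Cb * (Bs.ncard : ℝ) := by rw [hCb]; ring
  have core : ∀ t : ℕ, β * (w t : ℝ) - Cb * ((w (t+1) : ℝ) - (w t : ℝ)) ≤
      (∑ u, Ψ u (ℓ 0)) - ∑ u, Ψ u (lab (t+1)) := by
    intro t
    set g : ℕ → ℝ := fun m => ∑ u, Ψ u (applyChain A ℓ (I (t+1)) m) with hg
    have tele : ∑ m ∈ Finset.range h, (g m - g (m+1)) = g 0 - g h :=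
      Finset.sum_range_sub' g h
    have hg0 : g 0 = ∑ u, Ψ u (ℓ 0) := rfl
    have hgh : g h = ∑ u, Ψ u (lab (t+1)) := rfl
    -- closure of I t inside I (t+1) under 2r-interaction
    have hclose : ∀ i : Fin h, i ∈ I t → ∀ x ∈ A i, ∀ z : V, withinDist G (2*r) z x →
        ∀ i' : Fin h, z ∈ A i' → i' ∈ I (t+1) := by
      intro i hiI x hx z hz i' hzA
      obtain ⟨y, hy, hyv⟩ := hiI
      have hxy : withinDist G D' x y := hdiam' i x hx y hy
      have hzv : withinDist G (2*r + (D' + ρ t)) z v :=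
        withinDist_trans hz (withinDist_trans hxy hyv)
      refine ⟨z, hzA, withinDist_mono ?_ hzv⟩
      simp only [hρ, add_mul, one_mul]
      omega
    have step : ∀ m : ℕ, ∀ hm : m < h,
        (if (⟨m, hm⟩ : Fin h) ∈ I t then β * (((A ⟨m, hm⟩).ncard : ℕ) : ℝ)
         else if (⟨m, hm⟩ : Fin h) ∈ I (t+1) then -(Cb * (((A ⟨m, hm⟩).ncard : ℕ) : ℝ))
         else 0) ≤ g m - g (m+1) := by
      intro m hm
      set i : Fin h := ⟨m, hm⟩ with hi
      have hagree : ∀ z, z ∉ A i → applyChain A ℓ (I (t+1)) (m+1) z = applyChain A ℓ (I (t+1)) m z := by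
        intro z hz
        exact applyChain_succ_of_not (fun hm' hc => hz hc.2)
      by_cases hiIt : i ∈ I t
      · rw [if_pos hiIt]
        have hiS : i ∈ I (t+1) := hImono (Nat.le_succ t) hiIt
        have hterm : ∀ u : V, Ψ u (applyChain A ℓ (I (t+1)) m) - Ψ u (applyChain A ℓ (I (t+1)) (m+1))
            = Ψ u (ℓ i.castSucc) - Ψ u (ℓ i.succ) := by
          intro u
          by_cases hu : u ∈ nbrSet G r (A i)
          · obtain ⟨x, hxA, hux⟩ := hu
            have key : ∀ z : V, withinDist G r u z → ∀ i' : Fin h, z ∈ A i' → i' ∈ I (t+1) := by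
              intro z huz i' hzA
              have hzx : withinDist G (r + r) z x := withinDist_trans (withinDist_symm huz) hux
              exact hclose i hiIt x hxA z (withinDist_mono (by omega) hzx) i' hzA
            have e1 : Ψ u (applyChain A ℓ (I (t+1)) m) = Ψ u (ℓ i.castSucc) := by
              refine hloc u _ _ (fun z hz => ?_)
              exact applyChain_eq_chain h0 m (le_of_lt hm) z
                (fun i'' hi'' hzA => key z hz i'' hzA)
            have e2 : Ψ u (applyChain A ℓ (I (t+1)) (m+1)) = Ψ u (ℓ i.succ) := by
              refine hloc u _ _ (fun z hz => ?_)
              exact applyChain_eq_chain h0 (m+1) hm z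
                (fun i'' hi'' hzA => key z hz i'' hzA)
            rw [e1, e2]
          · have e3 : Ψ u (applyChain A ℓ (I (t+1)) (m+1)) = Ψ u (applyChain A ℓ (I (t+1)) m) :=
              psi_eq_of_agree hloc hagree hu
            have e4 : Ψ u (ℓ i.succ) = Ψ u (ℓ i.castSucc) :=
              psi_eq_of_agree hloc (h0 i) hu
            rw [e3, e4]
            ring
        have hgm : g m - g (m+1) = (∑ u, Ψ u (ℓ i.castSucc)) - ∑ u, Ψ u (ℓ i.succ) := by
          simp only [hg]
          rw [← Finset.sum_sub_distrib, ← Finset.sum_sub_distrib]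
          exact Finset.sum_congr rfl (fun u _ => hterm u)
        rw [hgm]
        exact hAβ i
      · rw [if_neg hiIt]
        by_cases hiS : i ∈ I (t+1)
        · rw [if_pos hiS]
          have h1 : g (m+1) - g m ≤ Λ * ((nbrSet G r (A i)).ncard : ℝ) :=
            potDiff_le hloc hbd hagree
          have h2 := hnbrCb (A i)
          have : g (m+1) - g m ≤ Cb * ((A i).ncard : ℝ) := h1.trans h2
          linarith
        · rw [if_neg hiS]
          have he : applyChain A ℓ (I (t+1)) (m+1) = applyChain A ℓ (I (t+1)) m := by
            funext z
            exact applyChain_succ_of_not (fun hm' hc => hiS hc.1)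
          have : g (m+1) = g m := by
            simp only [hg, he]
          linarith [this.ge, this.le]
    -- sum up
    have hsum1 : ∑ m ∈ Finset.range h,
        (if hm : m < h then
          (if (⟨m, hm⟩ : Fin h) ∈ I t then β * (((A ⟨m, hm⟩).ncard : ℕ) : ℝ)
           else if (⟨m, hm⟩ : Fin h) ∈ I (t+1) then -(Cb * (((A ⟨m, hm⟩).ncard : ℕ) : ℝ))
           else 0) else 0) ≤ g 0 - g h := by
      rw [← tele]
      refine Finset.sum_le_sum (fun m hmem => ?_)
      have hm : m < h := Finset.mem_range.mp hmem
      rw [dif_pos hm]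
      exact step m hm
    have hsum2 : ∑ m ∈ Finset.range h,
        (if hm : m < h then
          (if (⟨m, hm⟩ : Fin h) ∈ I t then β * (((A ⟨m, hm⟩).ncard : ℕ) : ℝ)
           else if (⟨m, hm⟩ : Fin h) ∈ I (t+1) then -(Cb * (((A ⟨m, hm⟩).ncard : ℕ) : ℝ))
           else 0) else 0)
        = ∑ i : Fin h, (if i ∈ I t then β * (((A i).ncard : ℕ) : ℝ)
           else if i ∈ I (t+1) then -(Cb * (((A i).ncard : ℕ) : ℝ)) else 0) := by
      rw [← Fin.sum_univ_eq_sum_range]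
      refine Finset.sum_congr rfl (fun i _ => ?_)
      rw [dif_pos i.isLt]
    have hsum3 : ∑ i : Fin h, (if i ∈ I t then β * (((A i).ncard : ℕ) : ℝ)
           else if i ∈ I (t+1) then -(Cb * (((A i).ncard : ℕ) : ℝ)) else 0)
        = β * (w t : ℝ) - Cb * ((w (t+1) : ℝ) - (w t : ℝ)) := by
      set f : Fin h → ℝ := fun i => (if i ∈ I t then β * (((A i).ncard : ℕ) : ℝ)
           else if i ∈ I (t+1) then -(Cb * (((A i).ncard : ℕ) : ℝ)) else 0) with hf
      set F2 : Finset (Fin h) := Finset.univ.filter (fun i => i ∉ I t ∧ i ∈ I (t+1)) with hF2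
      have e0 : ∑ i : Fin h, f i =
          ∑ i ∈ Finset.univ.filter (· ∈ I t), f i +
          ∑ i ∈ Finset.univ.filter (fun i => ¬(i ∈ I t)), f i :=
        (Finset.sum_filter_add_sum_filter_not _ _ _).symm
      have e1 : ∑ i ∈ Finset.univ.filter (· ∈ I t), f i = β * (w t : ℝ) := by
        have : (w t : ℝ) = ∑ i ∈ Finset.univ.filter (· ∈ I t), ((A i).ncard : ℝ) := by
          simp only [hw]
          push_cast
          rfl
        rw [this, Finset.mul_sum]
        refine Finset.sum_congr rfl (fun i hi => ?_)
        simp only [hf, if_pos (Finset.mem_filter.mp hi).2]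
      have e2 : ∑ i ∈ Finset.univ.filter (fun i => ¬(i ∈ I t)), f i
          = -(Cb * ∑ i ∈ F2, ((A i).ncard : ℝ)) := by
        have e2a : ∑ i ∈ Finset.univ.filter (fun i => ¬(i ∈ I t)), f i
            = ∑ i ∈ Finset.univ.filter (fun i => ¬(i ∈ I t)),
                (if i ∈ I (t+1) then -(Cb * (((A i).ncard : ℕ) : ℝ)) else 0) := by
          refine Finset.sum_congr rfl (fun i hi => ?_)
          have := (Finset.mem_filter.mp hi).2
          simp only [hf, if_neg this]
        have e2b : ∑ i ∈ Finset.univ.filter (fun i => ¬(i ∈ I t)),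
                (if i ∈ I (t+1) then -(Cb * (((A i).ncard : ℕ) : ℝ)) else 0)
            = ∑ i ∈ F2, -(Cb * (((A i).ncard : ℕ) : ℝ)) := by
          rw [← Finset.sum_filter, hF2, Finset.filter_filter]
        rw [e2a, e2b]
        rw [Finset.sum_neg_distrib, ← Finset.mul_sum]
      have e3 : w (t+1) = w t + ∑ i ∈ F2, (A i).ncard := by
        have e3a : Finset.univ.filter (· ∈ I (t+1)) =
            (Finset.univ.filter (· ∈ I (t+1))).filter (· ∈ I t) ∪
            (Finset.univ.filter (· ∈ I (t+1))).filter (fun i => ¬(i ∈ I t)) := by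
          rw [Finset.filter_union_filter_not_eq]
        have e3b : (Finset.univ.filter (· ∈ I (t+1))).filter (· ∈ I t)
            = Finset.univ.filter (· ∈ I t) := by
          rw [Finset.filter_filter]
          refine Finset.filter_congr (fun i _ => ?_)
          constructor
          · exact fun hx => hx.2
          · exact fun hx => ⟨hImono (Nat.le_succ t) hx, hx⟩
        have e3c : (Finset.univ.filter (· ∈ I (t+1))).filter (fun i => ¬(i ∈ I t)) = F2 := by
          rw [Finset.filter_filter, hF2]
          refine Finset.filter_congr (fun i _ => ?_)
          constructor
          · exact fun hx => ⟨hx.2, hx.1⟩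
          · exact fun hx => ⟨hx.2, hx.1⟩
        calc w (t+1) = ∑ i ∈ Finset.univ.filter (· ∈ I (t+1)), (A i).ncard := rfl
          _ = ∑ i ∈ Finset.univ.filter (· ∈ I t), (A i).ncard + ∑ i ∈ F2, (A i).ncard := by
              rw [e3a, Finset.sum_union (Finset.disjoint_filter_filter_not _ _ _), e3b, e3c]
          _ = w t + ∑ i ∈ F2, (A i).ncard := rfl
      have e3' : (w (t+1) : ℝ) = (w t : ℝ) + ∑ i ∈ F2, ((A i).ncard : ℝ) := by
        rw [e3]
        push_cast
        ring
      rw [e0, e1, e2, e3']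
      ring
    rw [hg0, hgh] at hsum1
    rw [hsum2, hsum3] at hsum1
    exact hsum1
  -- main dichotomy
  set δ : ℝ := ε / (2*Cb) with hδ
  have hδpos : 0 < δ := by positivity
  have hδ1 : δ ≤ 1 := by
    rw [hδ, div_le_one (by positivity)]; nlinarith
  set T₁ : ℕ := ⌈2*Cb/ε⌉₊ with hT₁
  set T₂ : ℕ := ⌈(4*Cb/ε) * max 0 (Real.log (Λ * n / (2*Cb)))⌉₊ + 1 with hT₂
  set T : ℕ := T₁ + T₂ with hT
  have hβCbε : 0 < β + Cb - ε := by linarith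
  have main : ∃ t ≤ T, β - ε ≤ IR Ψ (BB t) (ℓ 0) (lab t) := by
    by_contra hfail
    push_neg at hfail
    have growth : ∀ t : ℕ, t + 1 ≤ T →
        (β + Cb) * (w t : ℝ) < (β + Cb - ε) * (w (t+1) : ℝ) := by
      intro t ht
      have hne : BB (t+1) ≠ ∅ := Set.nonempty_iff_ne_empty.mp ⟨v, hvBB _⟩
      have hcpos : (0:ℝ) < ((BB (t+1)).ncard : ℝ) := by
        have : 0 < (BB (t+1)).ncard := (Set.ncard_pos (Set.toFinite _)).mpr ⟨v, hvBB _⟩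
        exact_mod_cast this
      have hf := hfail (t+1) ht
      rw [IR, if_neg hne, div_lt_iff₀ hcpos] at hf
      have hc2 : ((BB (t+1)).ncard : ℝ) ≤ (w (t+1) : ℝ) := by exact_mod_cast hBBcard (t+1)
      have hβε : 0 < β - ε := by linarith
      have hf2 : (∑ u, Ψ u (ℓ 0)) - ∑ u, Ψ u (lab (t+1)) < (β - ε) * (w (t+1) : ℝ) :=
        lt_of_lt_of_le hf (mul_le_mul_of_nonneg_left hc2 hβε.le)
      have := core t
      linarith
    have hstrict : ∀ t : ℕ, t + 1 ≤ T → w t < w (t+1) := by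
      intro t ht
      have hg := growth t ht
      have h2 : (β + Cb - ε) * (w (t+1) : ℝ) ≤ (β + Cb) * (w (t+1) : ℝ) :=
        mul_le_mul_of_nonneg_right (by linarith) (Nat.cast_nonneg _)
      have h3 : (β + Cb) * (w t : ℝ) < (β + Cb) * (w (t+1) : ℝ) := lt_of_lt_of_le hg h2
      have h1 : (w t : ℝ) < (w (t+1) : ℝ) :=
        lt_of_mul_lt_mul_left h3 (by positivity)
      exact_mod_cast h1
    have hlin : ∀ t : ℕ, t ≤ T → t + 1 ≤ w t := by
      intro t
      induction t with
      | zero => intro _; exact hw0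
      | succ t ih =>
        intro ht
        have h1 := ih (by omega)
        have h2 := hstrict t ht
        omega
    have hT₁w : 2*Cb/ε ≤ (w T₁ : ℝ) := by
      have h1 : T₁ + 1 ≤ w T₁ := hlin T₁ (by omega)
      have h2 : (2*Cb/ε : ℝ) ≤ (T₁ : ℝ) + 1 := by
        have := Nat.le_ceil (2*Cb/ε)
        rw [← hT₁] at this
        linarith
      have h3 : ((T₁:ℕ) : ℝ) + 1 ≤ (w T₁ : ℝ) := by exact_mod_cast h1
      linarith
    have hgrow2 : ∀ s : ℕ, T₁ + s ≤ T → (2*Cb/ε) * (1+δ)^s ≤ (w (T₁+s) : ℝ) := by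
      intro s
      induction s with
      | zero => intro _; simpa using hT₁w
      | succ s ih =>
        intro hs
        have ih' := ih (by omega)
        have hg := growth (T₁+s) (by omega)
        have hkey : (1+δ) * (β + Cb - ε) ≤ β + Cb := by
          have : δ * (β + Cb - ε) ≤ ε := by
            rw [hδ]
            rw [div_mul_eq_mul_div, div_le_iff₀ (by positivity)]
            nlinarith
          nlinarith
        have h1 : (1+δ) * (w (T₁+s) : ℝ) ≤ (w (T₁+s+1) : ℝ) := by
          have hwnn : (0:ℝ) ≤ (w (T₁+s) : ℝ) := Nat.cast_nonneg _
          have h2 : (β + Cb - ε) * ((1+δ) * (w (T₁+s) : ℝ)) ≤ (β + Cb) * (w (T₁+s) : ℝ) := by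
            calc (β + Cb - ε) * ((1+δ) * (w (T₁+s) : ℝ))
                = ((1+δ) * (β + Cb - ε)) * (w (T₁+s) : ℝ) := by ring
              _ ≤ (β + Cb) * (w (T₁+s) : ℝ) := mul_le_mul_of_nonneg_right hkey hwnn
          have h3 : (β + Cb - ε) * ((1+δ) * (w (T₁+s) : ℝ)) < (β + Cb - ε) * (w (T₁+s+1) : ℝ) :=
            lt_of_le_of_lt h2 hg
          exact le_of_lt (lt_of_mul_lt_mul_left h3 hβCbε.le)
        calc (2*Cb/ε) * (1+δ)^(s+1) = (1+δ) * ((2*Cb/ε) * (1+δ)^s) := by ring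
          _ ≤ (1+δ) * (w (T₁+s) : ℝ) := mul_le_mul_of_nonneg_left ih' (by linarith)
          _ ≤ (w (T₁+s+1) : ℝ) := h1
    have hfin := hgrow2 T₂ (by omega)
    -- w T ≤ W and ε W ≤ Λ n
    have hWε : (W:ℝ) ≤ Λ * n / ε := by
      rw [le_div_iff₀ hε]
      nlinarith [show (0:ℝ) ≤ (W:ℝ) from Nat.cast_nonneg W]
    have hwTW : ((w (T₁+T₂) : ℕ) : ℝ) ≤ (W : ℝ) := by exact_mod_cast hwW (T₁+T₂)
    have hup : (2*Cb/ε) * (1+δ)^T₂ ≤ Λ * n / ε := le_trans hfin (le_trans hwTW hWε)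
    have hpow : (1+δ)^T₂ ≤ Λ * n / (2*Cb) := by
      rw [div_mul_eq_mul_div] at hup
      have h1 : (2*Cb) * ((1+δ)^T₂) ≤ Λ * n := by
        have := (div_le_div_iff_of_pos_right hε).mp hup
        linarith
      rw [le_div_iff₀ (by positivity)]
      linarith
    have hpow1 : (1:ℝ) ≤ (1+δ)^T₂ := one_le_pow₀ (by linarith)
    have hΛn1 : (1:ℝ) ≤ Λ * n / (2*Cb) := le_trans hpow1 hpow
    have hLpos : 0 ≤ Real.log (Λ * n / (2*Cb)) := Real.log_nonneg hΛn1
    have hlogpow : (T₂ : ℝ) * Real.log (1+δ) ≤ Real.log (Λ * n / (2*Cb)) := by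
      rw [← Real.log_pow]
      exact Real.log_le_log (by positivity) hpow
    have hloglb : δ/2 ≤ Real.log (1+δ) := half_le_log_one_add hδpos hδ1
    have hT₂lb : (4*Cb/ε) * Real.log (Λ * n / (2*Cb)) + 1 ≤ (T₂ : ℝ) := by
      have h1 := Nat.le_ceil ((4*Cb/ε) * max 0 (Real.log (Λ * n / (2*Cb))))
      have h2 : (4*Cb/ε) * Real.log (Λ * n / (2*Cb)) ≤
          (4*Cb/ε) * max 0 (Real.log (Λ * n / (2*Cb))) := by
        refine mul_le_mul_of_nonneg_left (le_max_right _ _) (by positivity)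
      have h3 : ((⌈(4*Cb/ε) * max 0 (Real.log (Λ * n / (2*Cb)))⌉₊ : ℕ) : ℝ) + 1 = (T₂ : ℝ) := by
        rw [hT₂]
        push_cast
        ring
      linarith
    -- contradiction
    have hc1 : (T₂ : ℝ) * (δ/2) ≤ Real.log (Λ * n / (2*Cb)) := by
      have hT₂nn : (0:ℝ) ≤ (T₂:ℝ) := Nat.cast_nonneg _
      nlinarith
    have hc2 : Real.log (Λ * n / (2*Cb)) < (T₂ : ℝ) * (δ/2) := by
      have hδ2 : δ/2 = ε/(4*Cb) := by rw [hδ]; ring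
      rw [hδ2]
      have h4 : ((4*Cb/ε) * Real.log (Λ * n / (2*Cb)) + 1) * (ε/(4*Cb)) =
          Real.log (Λ * n / (2*Cb)) + ε/(4*Cb) := by
        field_simp
      have h5 : (4*Cb/ε) * Real.log (Λ * n / (2*Cb)) + 1 ≤ (T₂:ℝ) := hT₂lb
      nlinarith [mul_le_mul_of_nonneg_right h5 (show (0:ℝ) ≤ ε/(4*Cb) by positivity)]
    linarith
  obtain ⟨t₀, ht₀T, ht₀⟩ := main
  refine ⟨ρ (T+1), ?_, BB t₀, ⟨v, hvBB t₀⟩, ?_, lab t₀, hlabout t₀, ht₀⟩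
  · set E : ℝ := Real.log n / ε with hE'
    have hEpos : (0:ℝ) < E := by positivity
    have hl2 : (1:ℝ) ≤ Real.log n / Real.log 2 := by
      rw [le_div_iff₀ hlog2]; linarith
    have hCbε : (1:ℝ) ≤ Cb / ε := by
      rw [le_div_iff₀ hε]; linarith
    have hkey1 : (1:ℝ) ≤ (Cb / Real.log 2) * E := by
      have he : (Cb / Real.log 2) * E = (Cb / ε) * (Real.log n / Real.log 2) := by
        rw [hE']; field_simp
      rw [he]
      calc (1:ℝ) = 1 * 1 := by norm_num
        _ ≤ (Cb / ε) * (Real.log n / Real.log 2) :=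
            mul_le_mul hCbε hl2 zero_le_one (by positivity)
    -- bound on D' + 2r
    have hED : (D':ℝ) ≤ c₃ * E + 1 := by
      have h1 : ((⌈c₃ * Real.log n / ε⌉₊ : ℕ) : ℝ) < c₃ * Real.log n / ε + 1 :=
        Nat.ceil_lt_add_one (by positivity)
      have h2 : c₃ * Real.log n / ε = c₃ * E := by rw [hE']; ring
      rw [hD']
      linarith
    have hDA : (D':ℝ) + 2*r ≤ KD * E := by
      have h3 : (2*(r:ℝ)+1) * 1 ≤ (2*(r:ℝ)+1) * ((Cb / Real.log 2) * E) :=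
        mul_le_mul_of_nonneg_left hkey1 (by positivity)
      have h4 : KD * E = c₃ * E + (2*(r:ℝ)+1) * ((Cb / Real.log 2) * E) := by
        rw [hKD]; ring
      rw [h4]
      linarith
    -- bound on T + 2
    have hT₁R : (T₁:ℝ) ≤ 2*Cb/ε + 1 := by
      have h1 : ((⌈2*Cb/ε⌉₊ : ℕ) : ℝ) < 2*Cb/ε + 1 := Nat.ceil_lt_add_one (by positivity)
      rw [hT₁]
      linarith
    have hM : max 0 (Real.log (Λ * n / (2*Cb))) ≤ Real.log n + KL := by
      refine max_le (by positivity) ?_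
      have h1 : Real.log (Λ * n / (2*Cb)) = Real.log Λ + Real.log n - Real.log (2*Cb) := by
        rw [Real.log_div (by positivity) (by positivity),
          Real.log_mul (ne_of_gt hΛ) (by positivity)]
      rw [h1, hKL]
      have h2 := le_abs_self (Real.log Λ)
      have h3 := neg_abs_le (Real.log (2*Cb))
      linarith
    have hT₂R : (T₂:ℝ) ≤ (4*Cb/ε) * (Real.log n + KL) + 2 := by
      have h1 : ((⌈(4*Cb/ε) * max 0 (Real.log (Λ * n / (2*Cb)))⌉₊ : ℕ) : ℝ) <
          (4*Cb/ε) * max 0 (Real.log (Λ * n / (2*Cb))) + 1 :=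
        Nat.ceil_lt_add_one (by positivity)
      have h2 : (4*Cb/ε) * max 0 (Real.log (Λ * n / (2*Cb))) ≤ (4*Cb/ε) * (Real.log n + KL) :=
        mul_le_mul_of_nonneg_left hM (by positivity)
      have h3 : (T₂ : ℝ) = ((⌈(4*Cb/ε) * max 0 (Real.log (Λ * n / (2*Cb)))⌉₊ : ℕ) : ℝ) + 1 := by
        rw [hT₂]; push_cast; ring
      linarith
    have hTA : (T:ℝ) + 2 ≤ KT * E := by
      have hTc : (T:ℝ) = (T₁:ℝ) + (T₂:ℝ) := by rw [hT]; push_cast; ring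
      have e1 : (4*Cb/ε) * Real.log n = 4*Cb * E := by rw [hE']; ring
      have e2 : ((8*Cb + 4*Cb*KL) / Real.log 2) * E =
          ((8*Cb + 4*Cb*KL) / ε) * (Real.log n / Real.log 2) := by
        rw [hE']; field_simp
      have e3 : (8*Cb + 4*Cb*KL) / ε ≤ ((8*Cb + 4*Cb*KL) / ε) * (Real.log n / Real.log 2) :=
        le_mul_of_one_le_right (by positivity) hl2
      have e4 : 2*Cb/ε + (4*Cb/ε)*KL + 5 ≤ (8*Cb + 4*Cb*KL) / ε := by
        have e5 : 2*Cb/ε + (4*Cb/ε)*KL + 5 = (2*Cb + 4*Cb*KL + 5*ε) / ε := by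
          field_simp
        rw [e5]
        exact (div_le_div_iff_of_pos_right hε).mpr (by linarith)
      have e6 : KT * E = 4*Cb * E + ((8*Cb + 4*Cb*KL) / Real.log 2) * E := by
        rw [hKT]; ring
      have e7 : (4*Cb/ε) * (Real.log n + KL) = (4*Cb/ε) * Real.log n + (4*Cb/ε)*KL := by ring
      rw [e6]
      rw [e2]
      linarith [hT₁R, hT₂R, e1, e3, e4]
    -- assemble
    have hXnn : (0:ℝ) ≤ (D':ℝ) + 2*r := by positivity
    have hρc : ((ρ (T+1) : ℕ) : ℝ) = (D':ℝ) + ((T:ℝ)+1) * ((D':ℝ) + 2*r) := by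
      simp only [hρ]; push_cast; ring
    have hstep1 : ((ρ (T+1) : ℕ) : ℝ) ≤ ((T:ℝ)+2) * ((D':ℝ) + 2*r) := by
      rw [hρc]
      have e : ((T:ℝ)+2) * ((D':ℝ) + 2*r) = ((T:ℝ)+1) * ((D':ℝ) + 2*r) + ((D':ℝ) + 2*r) := by
        ring
      rw [e]
      have : (D':ℝ) ≤ (D':ℝ) + 2*r := by
        have : (0:ℝ) ≤ 2*(r:ℝ) := by positivity
        linarith
      linarith
    have hstep2 : ((T:ℝ)+2) * ((D':ℝ) + 2*r) ≤ (KT * E) * (KD * E) :=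
      mul_le_mul hTA hDA hXnn (by positivity)
    have hstep3 : (KT * E) * (KD * E) = KT * KD * (Real.log n)^2 / ε^2 := by
      rw [hE']; ring
    calc ((ρ (T+1) : ℕ) : ℝ) ≤ ((T:ℝ)+2) * ((D':ℝ) + 2*r) := hstep1
      _ ≤ (KT * E) * (KD * E) := hstep2
      _ = KT * KD * (Real.log n)^2 / ε^2 := hstep3
  · intro u hu
    refine ⟨?_, ?_⟩
    · exact withinDist_mono (hρmono (by omega)) (hBBsub t₀ hu)
    · simp only [hBB, Set.mem_iUnion] at hu
      obtain ⟨i, _, hui⟩ := hu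
      exact Set.mem_iUnion.mpr ⟨i, hui⟩
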